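/- Consider an AX for e, an agent α taking its turn at timestep t, and suppose that for every argument a ∈ X_α^{t−1}∖{e} the only path from a to e in Q_α^{t−1} is the single direct edge (a,e). Then a singleton contribution set C = {(a,e)} satisfies the conditions of the shallow behaviour with max = 1 iff it satisfies the conditions of the greedy behaviour; in this sense the shallow behaviour with max = 1 and the greedy behaviour are aligned. -/
import Mathlib


universe u v

variable {U : Type u} {Ag : Type v}

/-- A bipolar argumentation framework (BAF): arguments `X`, attacks `Att`, supports `Supp`. -/
structure BAF (U : Type u) where
  X : Finset U
  Att : Finset (U × U)
  Supp : Finset (U × U)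

namespace BAF

variable [DecidableEq U]

/-- The edges of a BAF: attacks together with supports. -/
def edges (B : BAF U) : Finset (U × U) := B.Att ∪ B.Supp

/-- A path from `a` to `b`: a nonempty list of consecutive edges `(c₀,c₁),…,(c_{n−1},cₙ)`
with `c₀ = a` and `cₙ = b`. -/
inductive IsPath (B : BAF U) : U → U → List (U × U) → Prop
  | single {a b : U} (h : (a, b) ∈ B.edges) : IsPath B a b [(a, b)]
  | cons {a c b : U} {p : List (U × U)} (h : (a, c) ∈ B.edges)
      (hp : IsPath B c b p) : IsPath B a b ((a, c) :: p)

/-- `B ⊑ B'` for BAFs (componentwise inclusion). -/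
def Sub (B B' : BAF U) : Prop := B.X ⊆ B'.X ∧ B.Att ⊆ B'.Att ∧ B.Supp ⊆ B'.Supp

/-- `B` is a BAF for the explanandum `e`. -/
structure IsFor (B : BAF U) (e : U) : Prop where
  e_mem : e ∈ B.X
  att_mem : ∀ p ∈ B.Att, p.1 ∈ B.X ∧ p.2 ∈ B.X
  supp_mem : ∀ p ∈ B.Supp, p.1 ∈ B.X ∧ p.2 ∈ B.X
  disj : ∀ p : U × U, ¬(p ∈ B.Att ∧ p ∈ B.Supp)
  no_out : ∀ a : U, (e, a) ∉ B.edges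
  reach : ∀ a ∈ B.X, a ≠ e → ∃ p, B.IsPath a e p
  acyclic : ∀ (a : U) (p : List (U × U)), ¬ B.IsPath a a p

/-- The number of attack edges occurring in a path. -/
def attCount (B : BAF U) (p : List (U × U)) : ℕ :=
  (p.filter (fun q => q ∈ B.Att)).length

/-- Pro arguments: arguments with a path to `e` containing an even number of attacks. -/
def pro (B : BAF U) (e : U) : Set U :=
  {a | a ∈ B.X ∧ ∃ p, B.IsPath a e p ∧ Even (B.attCount p)}

/-- Con arguments: arguments with a path to `e` containing an odd number of attacks. -/
def con (B : BAF U) (e : U) : Set U :=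
  {a | a ∈ B.X ∧ ∃ p, B.IsPath a e p ∧ Odd (B.attCount p)}

/-- The shortest path from `x` to `e` is strictly shorter than every path from `y` to `e`. -/
def SPlt (B : BAF U) (e x y : U) : Prop :=
  ∃ p, B.IsPath x e p ∧ ∀ q, B.IsPath y e q → p.length < q.length

end BAF

/-- A quantitative bipolar argumentation framework (QBAF), with base scores `bs`. -/
structure QBAF (U : Type u) where
  X : Finset U
  Att : Finset (U × U)
  Supp : Finset (U × U)
  bs : U → ℝ

namespace QBAF

variable [DecidableEq U]

def toBAF (Q : QBAF U) : BAF U := ⟨Q.X, Q.Att, Q.Supp⟩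

def edges (Q : QBAF U) : Finset (U × U) := Q.Att ∪ Q.Supp

/-- `Q` is a QBAF for `e`: its underlying BAF is for `e` and base scores lie in `[0,1]`. -/
def IsFor (Q : QBAF U) (e : U) : Prop :=
  Q.toBAF.IsFor e ∧ ∀ a ∈ Q.X, Q.bs a ∈ Set.Icc (0 : ℝ) 1

/-- `Q ⊑ Q'` for QBAFs. -/
def Sub (Q Q' : QBAF U) : Prop :=
  Q.X ⊆ Q'.X ∧ Q.Att ⊆ Q'.Att ∧ Q.Supp ⊆ Q'.Supp ∧ ∀ a ∈ Q.X, Q'.bs a = Q.bs a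

def attackers (Q : QBAF U) (a : U) : Finset U :=
  (Q.Att.filter (fun p => p.2 = a)).image Prod.fst

def supporters (Q : QBAF U) (a : U) : Finset U :=
  (Q.Supp.filter (fun p => p.2 = a)).image Prod.fst

end QBAF

/-- The DF-QuAD aggregation function on finite lists of values. -/
noncomputable def dfAgg : List ℝ → ℝ
  | [] => 0
  | v :: vs => v + dfAgg vs - v * dfAgg vs

/-- The DF-QuAD combination function. -/
noncomputable def dfComb (v0 vm vp : ℝ) : ℝ :=
  if vp ≤ vm then v0 - v0 * |vp - vm| else v0 + (1 - v0) * |vp - vm|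

/-- `f` is the DF-QuAD evaluation of the QBAF `Q`. -/
def IsDFQuADEval [DecidableEq U] (Q : QBAF U) (f : U → ℝ) : Prop :=
  ∀ a ∈ Q.X,
    f a = dfComb (Q.bs a) (dfAgg ((Q.attackers a).toList.map f))
        (dfAgg ((Q.supporters a).toList.map f))

/-- The stance determined by an evaluation value in `[0,1]`:
`−` (coded `-1`) on `[0,0.5)`, `0` on `{0.5}`, `+` (coded `1`) on `(0.5,1]`. -/
noncomputable def stanceVal (v : ℝ) : ℤ :=
  if v < 1 / 2 then -1 else if v = 1 / 2 then 0 else 1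

/-- An argumentative exchange (AX): exchange BAFs `B`, private QBAFs `Q`,
and a contributor mapping `contrib`. -/
structure AX (U : Type u) (Ag : Type v) where
  n : ℕ
  B : ℕ → BAF U
  Q : Ag → ℕ → QBAF U
  contrib : U × U → Ag × ℕ

namespace AX

variable [DecidableEq U]

/-- `E` is an AX for the explanandum `e` amongst the agents `Ag`. -/
structure IsAX (E : AX U Ag) (e : U) : Prop where
  n_pos : 0 < E.n
  agents : ∃ α β : Ag, α ≠ β
  B_for : ∀ t ≤ E.n, (E.B t).IsFor e
  B0_X : (E.B 0).X = {e}
  B0_Att : (E.B 0).Att = ∅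
  B0_Supp : (E.B 0).Supp = ∅
  B_mono : ∀ t < E.n, (E.B t).Sub (E.B (t + 1))
  Q_for : ∀ (α : Ag), ∀ t ≤ E.n, (E.Q α t).IsFor e
  Q_mono : ∀ (α : Ag), ∀ t < E.n, (E.Q α t).Sub (E.Q α (t + 1))
  Q_diff_X : ∀ (α : Ag), ∀ t < E.n,
    (E.Q α (t + 1)).X \ (E.Q α t).X ⊆ (E.B (t + 1)).X \ (E.B t).X
  Q_diff_Att : ∀ (α : Ag), ∀ t < E.n,
    (E.Q α (t + 1)).Att \ (E.Q α t).Att ⊆ (E.B (t + 1)).Att \ (E.B t).Att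
  Q_diff_Supp : ∀ (α : Ag), ∀ t < E.n,
    (E.Q α (t + 1)).Supp \ (E.Q α t).Supp ⊆ (E.B (t + 1)).Supp \ (E.B t).Supp
  learn_X : ∀ (α : Ag), ∀ t < E.n,
    (E.B (t + 1)).X \ (E.B t).X ⊆ (E.Q α (t + 1)).X
  learn_Att : ∀ (α : Ag), ∀ t < E.n,
    (E.B (t + 1)).Att \ (E.B t).Att ⊆ (E.Q α (t + 1)).Att
  learn_Supp : ∀ (α : Ag), ∀ t < E.n,
    (E.B (t + 1)).Supp \ (E.B t).Supp ⊆ (E.Q α (t + 1)).Supp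
  contrib_pos : ∀ p ∈ (E.B E.n).edges, 0 < (E.contrib p).2
  contrib_le : ∀ p ∈ (E.B E.n).edges, (E.contrib p).2 ≤ E.n
  contrib_mem : ∀ p ∈ (E.B E.n).edges, p ∈ (E.B (E.contrib p).2).edges
  contrib_new : ∀ p ∈ (E.B E.n).edges, p ∉ (E.B ((E.contrib p).2 - 1)).edges

/-- The set of edges contributed by agent `α` at timestep `t`. -/
def Cset [DecidableEq Ag] (E : AX U Ag) (α : Ag) (t : ℕ) : Finset (U × U) :=
  (E.B E.n).edges.filter (fun p => E.contrib p = (α, t))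

end AX

/-- All agents hold the same stance at timestep `t`. -/
def ResolvedAt (st : Ag → ℕ → ℤ) (t : ℕ) : Prop := ∀ α β : Ag, st α t = st β t

/-- The AX (with an initial conflict) is resolved. -/
def Resolved (E : AX U Ag) (st : Ag → ℕ → ℤ) : Prop :=
  ¬ ResolvedAt st 0 ∧ ResolvedAt st E.n ∧ ∀ t, 0 < t → t < E.n → ¬ ResolvedAt st t

/-- The AX (with an initial conflict) is unresolved. -/
def Unresolved (E : AX U Ag) (st : Ag → ℕ → ℤ) : Prop :=
  ¬ ResolvedAt st 0 ∧ ∀ t, 0 < t → t ≤ E.n → ¬ ResolvedAt st t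

/-- Agent `α` is arguing for `e` at `t`: some agent has a strictly smaller stance. -/
def ArguingFor (st : Ag → ℕ → ℤ) (α : Ag) (t : ℕ) : Prop := ∃ β, st β t < st α t

/-- Agent `α` is arguing against `e` at `t`: some agent has a strictly greater stance. -/
def ArguingAgainst (st : Ag → ℕ → ℤ) (α : Ag) (t : ℕ) : Prop := ∃ β, st α t < st β t

section Behaviours

variable [DecidableEq U]

/-- Condition (1) of the greedy behaviour: `(a,b)` is a pair of the private QBAF `Qp`
not yet in the exchange BAF `Bp`, in line with the agent's state (`forE`). -/
def GreedyEligible (Qp : QBAF U) (Bp : BAF U) (e : U) (forE : Bool) (a b : U) : Prop :=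
  (a, b) ∈ Qp.edges ∧ (a, b) ∉ Bp.edges ∧
    (if forE then
        ((a, b) ∈ Qp.Supp ∧ (b ∈ Bp.pro e ∨ b = e)) ∨ ((a, b) ∈ Qp.Att ∧ b ∈ Bp.con e)
      else
        ((a, b) ∈ Qp.Supp ∧ b ∈ Bp.con e) ∨ ((a, b) ∈ Qp.Att ∧ (b ∈ Bp.pro e ∨ b = e)))

/-- A greedy choice: eligible, of maximal strength (2), and closest to `e` among
equally strong eligible pairs (3). -/
def GreedyChoice (Qp : QBAF U) (Bp : BAF U) (σα : U → ℝ) (e : U) (forE : Bool)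
    (a b : U) : Prop :=
  GreedyEligible Qp Bp e forE a b ∧
    (∀ a' b' : U, GreedyEligible Qp Bp e forE a' b' → σα a' ≤ σα a) ∧
    (∀ a'' b'' : U, GreedyEligible Qp Bp e forE a'' b'' → σα a'' = σα a →
      ¬ BAF.SPlt Qp.toBAF e a'' a)

/-- A contribution set is a correct greedy contribution: empty or a single greedy choice. -/
def GreedyOK (Qp : QBAF U) (Bp : BAF U) (σα : U → ℝ) (e : U) (forE : Bool)
    (C : Finset (U × U)) : Prop :=
  C = ∅ ∨ ∃ a b : U, C = {(a, b)} ∧ GreedyChoice Qp Bp σα e forE a b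

/-- Agent `α` exhibits greedy behaviour throughout the AX `E`. -/
def GreedyBehaviour [DecidableEq Ag] (E : AX U Ag) (e : U)
    (ev : Ag → QBAF U → U → ℝ) (st : Ag → ℕ → ℤ) (α : Ag) : Prop :=
  ∀ t, 0 < t → t ≤ E.n →
    E.Cset α t = ∅ ∨
      ∃ a b : U, E.Cset α t = {(a, b)} ∧
        (ArguingFor st α (t - 1) →
          GreedyChoice (E.Q α (t - 1)) (E.B (t - 1)) (ev α (E.Q α (t - 1))) e true a b) ∧
        (ArguingAgainst st α (t - 1) →
          GreedyChoice (E.Q α (t - 1)) (E.B (t - 1)) (ev α (E.Q α (t - 1))) e false a b)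

/-- The inner condition of the shallow behaviour for a contribution set `C`. -/
def ShallowInner (Qp : QBAF U) (Bp : BAF U) (σα : U → ℝ) (e : U) (forE : Bool)
    (C : Finset (U × U)) (max : ℕ) : Prop :=
  C.card ≤ max ∧ (∀ p ∈ C, p.2 = e) ∧
    (if forE then
        C ⊆ Qp.Supp \ Bp.Supp ∧
          ∀ p ∈ C, ∀ b : U, (b, e) ∈ Qp.Supp → (b, e) ∉ Bp.Supp ∪ C → σα b ≤ σα p.1
      else
        C ⊆ Qp.Att \ Bp.Att ∧
          ∀ p ∈ C, ∀ b : U, (b, e) ∈ Qp.Att → (b, e) ∉ Bp.Att ∪ C → σα b ≤ σα p.1)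

/-- A contribution set is a correct shallow contribution: it satisfies the inner condition
and is of maximal cardinality doing so. -/
def ShallowOK (Qp : QBAF U) (Bp : BAF U) (σα : U → ℝ) (e : U) (forE : Bool)
    (C : Finset (U × U)) (max : ℕ) : Prop :=
  ShallowInner Qp Bp σα e forE C max ∧
    ∀ C' : Finset (U × U), ShallowInner Qp Bp σα e forE C' max → C'.card ≤ C.card

/-- A private view of the exchange BAF `Bp` by an agent with private QBAF `Qα`. -/
def PrivateView (Bp : BAF U) (Qα : QBAF U) (V : QBAF U) : Prop :=
  Bp.Sub V.toBAF ∧ V.Sub Qα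

/-- `ε` is the perceived effect on `e` of the pair `(a,b)` for an agent with private QBAF
`Qp` given the exchange BAF `Bp` (under the DF-QuAD evaluation). -/
def PerceivedEffect (Qp : QBAF U) (Bp : BAF U) (e a b : U) (ε : ℝ) : Prop :=
  ∃ (V V' : QBAF U) (f f' : U → ℝ),
    PrivateView Bp Qp V ∧
    V'.X = insert a V.X ∧
    V'.Att = (V'.X ×ˢ V'.X) ∩ Qp.Att ∧
    V'.Supp = (V'.X ×ˢ V'.X) ∩ Qp.Supp ∧
    (∀ x ∈ V'.X, V'.bs x = Qp.bs x) ∧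
    IsDFQuADEval V f ∧ IsDFQuADEval V' f' ∧
    ε = f' e - f e

/-- A pair eligible for the counterfactual behaviour. -/
def CFEligible (Qp : QBAF U) (Bp : BAF U) (a b : U) : Prop :=
  (a, b) ∈ Qp.edges ∧ (a, b) ∉ Bp.edges ∧ a ∈ Qp.X ∧ a ∉ Bp.X ∧ b ∈ Bp.X

/-- Agent `α` exhibits counterfactual behaviour throughout the AX `E`,
where `εf α t a b` is the perceived effect of `(a,b)` at timestep `t`. -/
def CFBehaviour [DecidableEq Ag] (E : AX U Ag) (st : Ag → ℕ → ℤ)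
    (εf : Ag → ℕ → U → U → ℝ) (α : Ag) : Prop :=
  ∀ t, 0 < t → t ≤ E.n →
    E.Cset α t = ∅ ∨
      ∃ a b : U, E.Cset α t = {(a, b)} ∧
        CFEligible (E.Q α (t - 1)) (E.B (t - 1)) a b ∧
        (ArguingFor st α (t - 1) →
          0 < εf α t a b ∧
            ∀ a' b' : U, CFEligible (E.Q α (t - 1)) (E.B (t - 1)) a' b' →
              εf α t a' b' ≤ εf α t a b) ∧
        (ArguingAgainst st α (t - 1) →
          εf α t a b < 0 ∧
            ∀ a' b' : U, CFEligible (E.Q α (t - 1)) (E.B (t - 1)) a' b' →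
              εf α t a b ≤ εf α t a' b')

end Behaviours

private lemma isPath_ne_nil {U : Type u} [DecidableEq U] {B : BAF U} {a b : U}
    {p : List (U × U)} (h : B.IsPath a b p) : p ≠ [] := by
  cases h <;> simp

/-- alignment of the shallow behaviour with `max = 1` and the greedy
behaviour when all paths to `e` are direct edges. -/
theorem statement9 {U : Type u} [DecidableEq U] (e : U) (Qp : QBAF U) (Bp : BAF U)
    (hQ : Qp.IsFor e) (hB : Bp.IsFor e) (hsub : Bp.Sub Qp.toBAF)
    (σα : U → ℝ) (forE : Bool)
    (hpath : ∀ x ∈ Qp.X, x ≠ e → ∀ p, Qp.toBAF.IsPath x e p ↔ p = [(x, e)]) :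
    ∀ a : U,
      ShallowOK Qp Bp σα e forE {(a, e)} 1 ↔ GreedyOK Qp Bp σα e forE {(a, e)} := by
  intro a
  obtain ⟨hQB, -⟩ := hQ
  -- every edge of `Qp` targets `e`
  have hne : ∀ x y : U, (x, y) ∈ Qp.edges → y = e := by
    intro x y hxy
    by_contra hy
    have hx : x ≠ e := fun h => hQB.no_out y (h ▸ hxy)
    have hmem : x ∈ Qp.X ∧ y ∈ Qp.X := by
      rcases Finset.mem_union.1 hxy with h | h
      · exact hQB.att_mem _ h
      · exact hQB.supp_mem _ h
    obtain ⟨q, hq⟩ := hQB.reach y hmem.2 hy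
    have hp : Qp.toBAF.IsPath x e ((x, y) :: q) := BAF.IsPath.cons hxy hq
    have h2 := (hpath x hmem.1 hx _).1 hp
    simp only [List.cons.injEq] at h2
    exact isPath_ne_nil hq h2.2
  -- there is no path out of `e` in `Bp`
  have hnoe : ∀ (b : U) (p : List (U × U)), ¬ Bp.IsPath e b p := by
    intro b p h
    cases h with
    | single h => exact hB.no_out _ h
    | cons h _ => exact hB.no_out _ h
  have heP : e ∉ Bp.pro e := by rintro ⟨-, p, hp, -⟩; exact hnoe _ _ hp
  have heC : e ∉ Bp.con e := by rintro ⟨-, p, hp, -⟩; exact hnoe _ _ hp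
  have hdisj := hQB.disj
  -- characterisation of greedy eligibility, `forE = true`
  have heligT : ∀ x y : U, GreedyEligible Qp Bp e true x y ↔
      y = e ∧ (x, e) ∈ Qp.Supp ∧ (x, e) ∉ Bp.Supp := by
    intro x y
    constructor
    · rintro ⟨hin, hout, hcond⟩
      have hy : y = e := hne x y hin
      subst hy
      simp only [if_pos rfl] at hcond
      rcases hcond with ⟨hs, -⟩ | ⟨ha, hc⟩
      · exact ⟨rfl, hs, fun hbs => hout (Finset.mem_union.2 (Or.inr hbs))⟩
      · exact absurd hc heC
    · rintro ⟨hy, hs, hns⟩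
      subst y
      have hnatt : (x, e) ∉ Bp.Att := fun h => hdisj (x, e) ⟨hsub.2.1 h, hs⟩
      refine ⟨Finset.mem_union.2 (Or.inr hs), ?_, ?_⟩
      · intro h
        rcases Finset.mem_union.1 h with h | h
        · exact hnatt h
        · exact hns h
      · simp only [if_pos rfl]
        simp [hs]
  -- characterisation of greedy eligibility, `forE = false`
  have heligF : ∀ x y : U, GreedyEligible Qp Bp e false x y ↔
      y = e ∧ (x, e) ∈ Qp.Att ∧ (x, e) ∉ Bp.Att := by
    intro x y
    constructor
    · rintro ⟨hin, hout, hcond⟩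
      have hy : y = e := hne x y hin
      subst hy
      simp only [Bool.false_eq_true, if_neg, if_false] at hcond
      rcases hcond with ⟨hs, hc⟩ | ⟨ha, -⟩
      · exact absurd hc heC
      · exact ⟨rfl, ha, fun hba => hout (Finset.mem_union.2 (Or.inl hba))⟩
    · rintro ⟨hy, ha, hna⟩
      subst y
      have hnsupp : (x, e) ∉ Bp.Supp := fun h => hdisj (x, e) ⟨ha, hsub.2.2 h⟩
      refine ⟨Finset.mem_union.2 (Or.inl ha), ?_, ?_⟩
      · intro h
        rcases Finset.mem_union.1 h with h | h
        · exact hna h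
        · exact hnsupp h
      · simp only [Bool.false_eq_true, if_neg, if_false]
        simp [ha]
  -- condition (3) of the greedy behaviour holds automatically
  have hnsplt : (a, e) ∈ Qp.edges → ∀ x : U, ¬ BAF.SPlt Qp.toBAF e x a := by
    rintro hae x ⟨p, hp, hlt⟩
    have h1 := hlt [(a, e)] (BAF.IsPath.single hae)
    have h2 : 0 < p.length := List.length_pos_iff.2 (isPath_ne_nil hp)
    simp only [List.length_singleton] at h1
    omega
  cases forE with
  | true =>
    constructor
    · rintro ⟨⟨-, -, hC⟩, -⟩
      simp only [if_pos rfl] at hC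
      obtain ⟨hsubC, hmax⟩ := hC
      have hae := Finset.mem_sdiff.1 (hsubC (Finset.mem_singleton_self _))
      refine Or.inr ⟨a, e, rfl, (heligT a e).2 ⟨rfl, hae.1, hae.2⟩, ?_, ?_⟩
      · intro a' b' h'
        obtain ⟨-, hs', hns'⟩ := (heligT a' b').1 h'
        by_cases hcase : a' = a
        · subst hcase; exact le_refl _
        · refine hmax (a, e) (Finset.mem_singleton_self _) a' hs' ?_
          intro h
          rcases Finset.mem_union.1 h with h | h
          · exact hns' h
          · exact hcase (Prod.mk.injEq .. ▸ Finset.mem_singleton.1 h).1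
      · intro a'' b'' h'' hσ
        exact hnsplt (Finset.mem_union.2 (Or.inr hae.1)) a''
    · rintro (hC | ⟨a', b', hCeq, helig, hstr, -⟩)
      · exact absurd hC (Finset.singleton_ne_empty _)
      · have heq : (a, e) = (a', b') := Finset.singleton_inj.1 hCeq
        injection heq with h1 h2
        subst h1; subst h2
        obtain ⟨-, hs, hns⟩ := (heligT a e).1 helig
        refine ⟨⟨?_, ?_, ?_⟩, fun C' hC' => ?_⟩
        · simp
        · simp
        · simp only [if_pos rfl]
          refine ⟨?_, ?_⟩
          · intro p hp
            rw [Finset.mem_singleton] at hp; subst hp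
            exact Finset.mem_sdiff.2 ⟨hs, hns⟩
          · intro p hp b hb hnb
            rw [Finset.mem_singleton] at hp; subst hp
            exact hstr b e ((heligT b e).2
              ⟨rfl, hb, fun h => hnb (Finset.mem_union.2 (Or.inl h))⟩)
        · simpa using hC'.1
  | false =>
    constructor
    · rintro ⟨⟨-, -, hC⟩, -⟩
      simp only [Bool.false_eq_true, if_neg, if_false] at hC
      obtain ⟨hsubC, hmax⟩ := hC
      have hae := Finset.mem_sdiff.1 (hsubC (Finset.mem_singleton_self _))
      refine Or.inr ⟨a, e, rfl, (heligF a e).2 ⟨rfl, hae.1, hae.2⟩, ?_, ?_⟩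
      · intro a' b' h'
        obtain ⟨-, ha', hna'⟩ := (heligF a' b').1 h'
        by_cases hcase : a' = a
        · subst hcase; exact le_refl _
        · refine hmax (a, e) (Finset.mem_singleton_self _) a' ha' ?_
          intro h
          rcases Finset.mem_union.1 h with h | h
          · exact hna' h
          · exact hcase (Prod.mk.injEq .. ▸ Finset.mem_singleton.1 h).1
      · intro a'' b'' h'' hσ
        exact hnsplt (Finset.mem_union.2 (Or.inl hae.1)) a''
    · rintro (hC | ⟨a', b', hCeq, helig, hstr, -⟩)
      · exact absurd hC (Finset.singleton_ne_empty _)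
      · have heq : (a, e) = (a', b') := Finset.singleton_inj.1 hCeq
        injection heq with h1 h2
        subst h1; subst h2
        obtain ⟨-, ha, hna⟩ := (heligF a e).1 helig
        refine ⟨⟨?_, ?_, ?_⟩, fun C' hC' => ?_⟩
        · simp
        · simp
        · simp only [Bool.false_eq_true, if_neg, if_false]
          refine ⟨?_, ?_⟩
          · intro p hp
            rw [Finset.mem_singleton] at hp; subst hp
            exact Finset.mem_sdiff.2 ⟨ha, hna⟩
          · intro p hp b hb hnb
            rw [Finset.mem_singleton] at hp; subst hp
            exact hstr b e ((heligF b e).2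
              ⟨rfl, hb, fun h => hnb (Finset.mem_union.2 (Or.inl h))⟩)
        · simpa using hC'.1
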